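/- With the rank-one dressing data below, for every λ ∈ ℂ with λ² ≠ k² and λ² ≠ conj(k)², one has σ₂·D(λ)ᵀ·σ₂ = ((λ²−conj(k)²)/(λ²−k²))·E(λ). -/

import Mathlib

open Matrix Complex ComplexConjugate

noncomputable section

abbrev M2 := Matrix (Fin 2) (Fin 2) ℂ
abbrev Vec2 := Matrix (Fin 2) (Fin 1) ℂ

def sigma3 : M2 := !![1, 0; 0, -1]
def sigma2 : M2 := !![0, -Complex.I; Complex.I, 0]

/-- α = (k|y₁|² + k̄|y₂|²)⁻¹ -/
def alph (k : ℂ) (y : Vec2) : ℂ :=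
  (k * (Complex.normSq (y 0 0) : ℂ) + conj k * (Complex.normSq (y 1 0) : ℂ))⁻¹

/-- z = ((k²−k̄²)/2)·diag(α,ᾱ)·y -/
def zvec (k : ℂ) (y : Vec2) : Vec2 :=
  ((k ^ 2 - (conj k) ^ 2) / 2) • (!![alph k y, 0; 0, conj (alph k y)] * y)

/-- B = |z⟩⟨y| -/
def Bmat (k : ℂ) (y : Vec2) : M2 := zvec k y * yᴴ

/-- D(λ) = I + B/(λ−k) − σ₃Bσ₃/(λ+k) -/
def Dfun (k : ℂ) (y : Vec2) (lam : ℂ) : M2 :=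
  1 + (lam - k)⁻¹ • Bmat k y - (lam + k)⁻¹ • (sigma3 * Bmat k y * sigma3)

/-- E(λ) = I + B†/(λ−k̄) − σ₃B†σ₃/(λ+k̄) -/
def Efun (k : ℂ) (y : Vec2) (lam : ℂ) : M2 :=
  1 + (lam - conj k)⁻¹ • (Bmat k y)ᴴ - (lam + conj k)⁻¹ • (sigma3 * (Bmat k y)ᴴ * sigma3)

set_option maxHeartbeats 4000000 in
/-- σ₂·D(λ)ᵀ·σ₂ = ((λ²−k̄²)/(λ²−k²))·E(λ). -/
theorem sigma2_D_transpose (k : ℂ) (hre : k.re ≠ 0) (him : k.im ≠ 0) (y : Vec2)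
    (hy : k * (Complex.normSq (y 0 0) : ℂ) + conj k * (Complex.normSq (y 1 0) : ℂ) ≠ 0) :
    ∀ lam : ℂ, lam ^ 2 ≠ k ^ 2 → lam ^ 2 ≠ (conj k) ^ 2 →
      sigma2 * (Dfun k y lam)ᵀ * sigma2
        = ((lam ^ 2 - (conj k) ^ 2) / (lam ^ 2 - k ^ 2)) • Efun k y lam := by
  intro lam h1 h2
  have hmk : lam - k ≠ 0 := fun h => h1 (by rw [sub_eq_zero] at h; rw [h])
  have hpk : lam + k ≠ 0 := by
    intro h
    exact h1 (by have : lam = -k := by linear_combination h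
                 rw [this]; ring)
  have hmc : lam - conj k ≠ 0 := fun h => h2 (by rw [sub_eq_zero] at h; rw [h])
  have hpc : lam + conj k ≠ 0 := by
    intro h
    exact h2 (by have : lam = -conj k := by linear_combination h
                 rw [this]; ring)
  have hk2 : lam ^ 2 - k ^ 2 ≠ 0 := sub_ne_zero.mpr h1
  have hyc : conj k * (Complex.normSq (y 0 0) : ℂ) + k * (Complex.normSq (y 1 0) : ℂ) ≠ 0 := by
    intro h
    apply hy
    have := congrArg conj h
    simpa [map_add, _root_.map_mul, Complex.conj_conj, Complex.conj_ofReal, add_comm] using this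
  have hs : k * (conj (y 0 0) * y 0 0) + conj k * (conj (y 1 0) * y 1 0) ≠ 0 := by
    simpa [Complex.normSq_eq_conj_mul_self] using hy
  have hsc : conj k * (conj (y 0 0) * y 0 0) + k * (conj (y 1 0) * y 1 0) ≠ 0 := by
    simpa [Complex.normSq_eq_conj_mul_self] using hyc
  ext i j
  fin_cases i <;> fin_cases j <;>
  · simp only [Dfun, Efun, Bmat, zvec, alph, sigma2, sigma3, Matrix.mul_apply, Matrix.of_apply,
      Matrix.transpose_apply, Matrix.conjTranspose_apply, Fin.sum_univ_two,
      Fin.sum_univ_one, Fin.mk_zero, Fin.mk_one, Fin.isValue, if_true,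
      Matrix.smul_apply, Matrix.add_apply, Matrix.sub_apply, Matrix.one_apply,
      Matrix.cons_val', Matrix.cons_val_zero, Matrix.cons_val_one, Matrix.head_cons,
      Matrix.head_fin_const, Matrix.empty_val', Matrix.cons_val_fin_one,
      smul_eq_mul, map_add, _root_.map_mul, map_inv₀, map_sub, map_div₀, map_pow,
      map_ofNat, Complex.conj_conj, Complex.conj_ofReal, RCLike.star_def,
      Complex.normSq_eq_conj_mul_self, one_ne_zero, if_false,
      Matrix.one_apply_eq, Matrix.one_apply_ne, ne_eq, zero_ne_one,
      not_false_eq_true, Fin.zero_eta, Fin.reduceEq]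
    set S := k * ((starRingEnd ℂ) (y 0 0) * y 0 0) +
        (starRingEnd ℂ) k * ((starRingEnd ℂ) (y 1 0) * y 1 0) with hSdef
    set T := (starRingEnd ℂ) k * (y 0 0 * (starRingEnd ℂ) (y 0 0)) +
        k * (y 1 0 * (starRingEnd ℂ) (y 1 0)) with hTdef
    clear_value S T
    have hS0 : S ≠ 0 := hs
    have hT0 : T ≠ 0 := by
      rw [hTdef]; intro h; exact hsc (by linear_combination h)
    have hcS : (starRingEnd ℂ) S ≠ 0 := by
      intro h; exact hS0 (by simpa using congrArg (starRingEnd ℂ) h)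
    have hcT : (starRingEnd ℂ) T ≠ 0 := by
      intro h; exact hT0 (by simpa using congrArg (starRingEnd ℂ) h)
    have hcsS : (starRingEnd ℂ) S = T := by
      rw [hSdef, hTdef]
      simp only [map_add, _root_.map_mul, Complex.conj_conj]
    have hcsT : (starRingEnd ℂ) T = S := by
      rw [hSdef, hTdef]
      simp only [map_add, _root_.map_mul, Complex.conj_conj]
    field_simp
    simp only [map_zero]
    try rw [hSdef]
    try rw [hTdef]
    ring_nf
    simp only [Complex.I_sq]
    ring
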